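/- Let B ⊆ ℝ^(n+1) be compact, strictly convex, with non-empty interior, v a unit vector, and S = ∂B. The median M_v := { (x⁺+x⁻)/2 : x⁺ ∈ D_v^+, x⁻ ∈ D_v^-, p_v(x⁺)=p_v(x⁻) } is compact, and the restriction of p_v to M_v is a homeomorphism onto the disc p_v(B); in particular M_v is homeomorphic to D^n. -/

import Mathlib

open Filter
open scoped Topology


open Metric Set
open scoped RealInnerProductSpace

/-- Orthogonal projection of `ℝ^{n+1}` onto the hyperplane orthogonal to `v`. -/
noncomputable def pv {n : ℕ} (v : EuclideanSpace ℝ (Fin (n + 1))) :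
    EuclideanSpace ℝ (Fin (n + 1)) →L[ℝ] ↥((ℝ ∙ v)ᗮ) :=
  Submodule.orthogonalProjectionOnto (ℝ ∙ v)ᗮ

/-- `B` is strictly convex: every open segment between two distinct points of `B`
lies in the interior of `B`. -/
def StrictlyConvexSet {V : Type*} [AddCommGroup V] [Module ℝ V] [TopologicalSpace V]
    (B : Set V) : Prop :=
  ∀ x ∈ B, ∀ y ∈ B, x ≠ y → openSegment ℝ x y ⊆ interior B

/-- Points of `B` projecting to the boundary of `p_v(B)`. -/
def D0 {n : ℕ} (B : Set (EuclideanSpace ℝ (Fin (n + 1)))) (v : EuclideanSpace ℝ (Fin (n + 1))) :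
    Set (EuclideanSpace ℝ (Fin (n + 1))) :=
  {x ∈ B | pv v x ∈ frontier (pv v '' B)}

/-- Upper region of `S = ∂B`: points over the interior of `p_v(B)` maximizing `x·v` on the fiber. -/
def Uplus {n : ℕ} (B : Set (EuclideanSpace ℝ (Fin (n + 1)))) (v : EuclideanSpace ℝ (Fin (n + 1))) :
    Set (EuclideanSpace ℝ (Fin (n + 1))) :=
  {x | x ∈ frontier B ∧ pv v x ∈ interior (pv v '' B) ∧
    ∀ y ∈ B, pv v y = pv v x → ⟪y, v⟫ ≤ ⟪x, v⟫}

/-- Lower region of `S = ∂B`: points over the interior of `p_v(B)` minimizing `x·v` on the fiber. -/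
def Uminus {n : ℕ} (B : Set (EuclideanSpace ℝ (Fin (n + 1)))) (v : EuclideanSpace ℝ (Fin (n + 1))) :
    Set (EuclideanSpace ℝ (Fin (n + 1))) :=
  {x | x ∈ frontier B ∧ pv v x ∈ interior (pv v '' B) ∧
    ∀ y ∈ B, pv v y = pv v x → ⟪x, v⟫ ≤ ⟪y, v⟫}

def Dplus {n : ℕ} (B : Set (EuclideanSpace ℝ (Fin (n + 1)))) (v : EuclideanSpace ℝ (Fin (n + 1))) :
    Set (EuclideanSpace ℝ (Fin (n + 1))) := D0 B v ∪ Uplus B v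

def Dminus {n : ℕ} (B : Set (EuclideanSpace ℝ (Fin (n + 1)))) (v : EuclideanSpace ℝ (Fin (n + 1))) :
    Set (EuclideanSpace ℝ (Fin (n + 1))) := D0 B v ∪ Uminus B v

/-- The median of `S` in direction `v`: midpoints of fiber pairs. -/
def median {n : ℕ} (B : Set (EuclideanSpace ℝ (Fin (n + 1)))) (v : EuclideanSpace ℝ (Fin (n + 1))) :
    Set (EuclideanSpace ℝ (Fin (n + 1))) :=
  {z | ∃ xp ∈ Dplus B v, ∃ xm ∈ Dminus B v, pv v xp = pv v xm ∧ z = midpoint ℝ xp xm}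


section lems
variable {n : ℕ} {v x y : EuclideanSpace ℝ (Fin (n + 1))}
  {B : Set (EuclideanSpace ℝ (Fin (n + 1)))}
  {B : Set (EuclideanSpace ℝ (Fin (n + 1)))}


lemma inner_coe_v (w : ↥((ℝ ∙ v)ᗮ)) : ⟪(w : EuclideanSpace ℝ (Fin (n+1))), v⟫ = 0 := by
  have := w.2
  rw [Submodule.mem_orthogonal] at this
  have h := this v (Submodule.mem_span_singleton_self v)
  rwa [real_inner_comm] at h

lemma pv_coe (w : ↥((ℝ ∙ v)ᗮ)) : pv v (w : EuclideanSpace ℝ (Fin (n+1))) = w :=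
  Submodule.orthogonalProjectionOnto_mem_subspace_eq_self w

lemma pv_surj : Function.Surjective (pv v) := fun w => ⟨w, pv_coe w⟩

lemma pv_v : pv v v = 0 := by
  apply Submodule.orthogonalProjectionOnto_apply_of_mem_orthogonal
  exact Submodule.le_orthogonal_orthogonal _ (Submodule.mem_span_singleton_self v)

lemma decomp (hv : ‖v‖ = 1) (x : EuclideanSpace ℝ (Fin (n+1))) :
    x = ((pv v x : EuclideanSpace ℝ (Fin (n+1)))) + ⟪x, v⟫ • v := by
  have h := Submodule.starProjection_add_starProjection_orthogonal (K := ℝ ∙ v) x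
  rw [Submodule.starProjection_singleton, hv] at h
  simp only [one_pow, RCLike.ofReal_real_eq_id, id, div_one] at h
  rw [real_inner_comm] at h
  calc x = ⟪x, v⟫ • v + ↑(pv v x) := h.symm
  _ = _ := add_comm _ _

lemma eq_of_pv_inner (hv : ‖v‖ = 1) (h1 : pv v x = pv v y) (h2 : ⟪x, v⟫ = ⟪y, v⟫) :
    x = y := by
  rw [decomp hv x, decomp hv y, h1, h2]

lemma pv_isOpenMap : IsOpenMap (pv v) :=
  (pv v).isOpenMap pv_surj



lemma pv_midpoint : pv v (midpoint ℝ x y) = midpoint ℝ (pv v x) (pv v y) := by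
  simp [midpoint_eq_smul_add, map_add, map_smul]

lemma sc_convex (hBsc : StrictlyConvexSet B) : Convex ℝ B := by
  rw [convex_iff_segment_subset]
  intro x hx y hy
  rcases eq_or_ne x y with rfl | hne
  · simpa [segment_same] using hx
  · rw [← insert_endpoints_openSegment]
    exact insert_subset hx (insert_subset hy
        ((hBsc x hx y hy hne).trans interior_subset))

lemma int_image_sub : pv v '' interior B ⊆ interior (pv v '' B) :=
  interior_maximal (image_mono interior_subset) (pv_isOpenMap _ isOpen_interior)

/-- uniqueness of points of `B` on a fiber over a frontier point of the shadow -/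
lemma fiber_unique (hBsc : StrictlyConvexSet B) (hx : x ∈ B) (hy : y ∈ B)
    (hpq : pv v x = pv v y) (hf : pv v x ∈ frontier (pv v '' B)) : x = y := by
  by_contra hne
  have hm : midpoint ℝ x y ∈ interior B :=
    hBsc x hx y hy hne ⟨1/2, 1/2, by norm_num, by norm_num, by norm_num, by
      rw [midpoint_eq_smul_add, smul_add]; norm_num⟩
  have : pv v (midpoint ℝ x y) ∈ interior (pv v '' B) :=
    int_image_sub (mem_image_of_mem _ hm)
  rw [pv_midpoint, ← hpq, midpoint_self] at this
  exact hf.2 this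

/-- interior of the shadow is covered by projections of interior points -/
lemma int_sub_image (hBsc : StrictlyConvexSet B) (hBint : (interior B).Nonempty) :
    interior (pv v '' B) ⊆ pv v '' interior B := by
  rintro w hw
  obtain ⟨b₀, hb₀⟩ := hBint
  rcases eq_or_ne w (pv v b₀) with rfl | hne
  · exact mem_image_of_mem _ hb₀
  · obtain ⟨ε, hε, hball⟩ := Metric.isOpen_iff.1 isOpen_interior w hw
    set d : ↥((ℝ ∙ v)ᗮ) := w - pv v b₀ with hd
    have hdne : d ≠ 0 := sub_ne_zero.2 hne
    have hdn : (0:ℝ) < ‖d‖ := norm_pos_iff.2 hdne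
    set ε' : ℝ := ε / (2 * ‖d‖) with hε'
    have hε'pos : 0 < ε' := by positivity
    have hw' : w + ε' • d ∈ interior (pv v '' B) := by
      apply hball
      rw [mem_ball_iff_norm, add_sub_cancel_left, norm_smul, Real.norm_eq_abs,
        abs_of_pos hε'pos]
      have h2 : ε' * ‖d‖ = ε / 2 := by
        rw [hε', div_mul_eq_mul_div, div_eq_div_iff (by positivity) two_ne_zero]; ring
      rw [h2]; linarith
    obtain ⟨b', hb', hb'w⟩ := interior_subset hw'
    -- w = (ε'/(1+ε')) • (pv b₀) + (1/(1+ε')) • (pv b')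
    set a : ℝ := ε' / (1 + ε') with ha
    set b : ℝ := 1 / (1 + ε') with hb
    have hab : a + b = 1 := by rw [ha, hb]; field_simp; ring
    have hbpos : 0 < b := by positivity
    have hapos : 0 < a := by positivity
    refine ⟨a • b₀ + b • b', ?_, ?_⟩
    · exact (sc_convex hBsc).combo_interior_self_mem_interior hb₀ hb' hapos hbpos.le hab
    · rw [map_add, map_smul, map_smul, hb'w, hd, ha, hb]
      have h1 : (1 + ε') ≠ 0 := by positivity
      match_scalars <;> · field_simp; try ring


set_option maxHeartbeats 2000000 in
lemma fiber_bound (hBsc : StrictlyConvexSet B) (hBint : (interior B).Nonempty)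
    {u : ℕ → EuclideanSpace ℝ (Fin (n+1))} {x : EuclideanSpace ℝ (Fin (n+1))}
    (w : EuclideanSpace ℝ (Fin (n+1)))
    (hw : ∀ a : ↥((ℝ ∙ v)ᗮ), ⟪(a : EuclideanSpace ℝ (Fin (n+1))), w⟫ = 0)
    (hu : ∀ k, u k ∈ B ∧ (∀ y ∈ B, pv v y = pv v (u k) → ⟪y, w⟫ ≤ ⟪u k, w⟫))
    (hux : Tendsto u atTop (𝓝 x)) (hxK : pv v x ∈ interior (pv v '' B)) :
    ∀ y ∈ B, pv v y = pv v x → ⟪y, w⟫ ≤ ⟪x, w⟫ := by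
  intro y hy hyx
  obtain ⟨c, hc, hcw⟩ := int_sub_image hBsc hBint hxK
  suffices h : ∀ t ∈ Ioo (0:ℝ) 1, t * ⟪c, w⟫ + (1 - t) * ⟪y, w⟫ ≤ ⟪x, w⟫ by
    have htend : Tendsto (fun t : ℝ => t * ⟪c, w⟫ + (1 - t) * ⟪y, w⟫) (𝓝[>] 0)
        (𝓝 ⟪y, w⟫) := by
      have hc : Continuous (fun t : ℝ => t * ⟪c, w⟫ + (1 - t) * ⟪y, w⟫) := by continuity
      have := hc.tendsto 0
      simp only [zero_mul, sub_zero, one_mul, zero_add] at this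
      exact this.mono_left nhdsWithin_le_nhds
    refine le_of_tendsto htend ?_
    filter_upwards [Ioo_mem_nhdsGT_of_mem (by constructor <;> norm_num :
      (0:ℝ) ∈ Ico (0:ℝ) 1)] with t ht using h t ht
  intro t ht
  set yt := t • c + (1 - t) • y with hyt_def
  have hyt : yt ∈ interior B :=
    (sc_convex hBsc).combo_interior_self_mem_interior hc hy ht.1 (by linarith [ht.2]) (by ring)
  have hpvyt : pv v yt = pv v x := by
    rw [hyt_def, map_add, map_smul, map_smul, hcw, hyx, Convex.combo_self (by ring)]
  set z : ℕ → EuclideanSpace ℝ (Fin (n+1)) :=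
    fun k => yt + ((pv v (u k - x) : EuclideanSpace ℝ (Fin (n+1)))) with hz_def
  have hz : Tendsto z atTop (𝓝 yt) := by
    have h0 : Tendsto (fun k => u k - x) atTop (𝓝 0) := by
      simpa using hux.sub (tendsto_const_nhds (x := x))
    have h1 : Tendsto (fun k => ((pv v (u k - x) : EuclideanSpace ℝ (Fin (n+1)))))
        atTop (𝓝 0) := by
      have := (continuous_subtype_val.comp (pv v).continuous).tendsto 0
      simp only [Function.comp, map_zero] at this
      exact (this.comp h0).congr fun k => rfl
    have h2 := (tendsto_const_nhds (x := yt)).add h1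
    rw [add_zero] at h2
    exact h2
  have hev : ∀ᶠ k in atTop, z k ∈ interior B :=
    hz.eventually (isOpen_interior.eventually_mem hyt)
  have hle : ∀ᶠ k in atTop, ⟪yt, w⟫ ≤ ⟪u k, w⟫ := by
    filter_upwards [hev] with k hk
    have hzB : z k ∈ B := interior_subset hk
    have hpz : pv v (z k) = pv v (u k) := by
      rw [hz_def]
      simp only [map_add, pv_coe, hpvyt, map_sub]
      abel
    have h2 := (hu k).2 (z k) hzB hpz
    have h3 : ⟪z k, w⟫ = ⟪yt, w⟫ := by
      rw [hz_def]; simp only [inner_add_left, hw, add_zero]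
    linarith
  have h4 : Tendsto (fun k => ⟪u k, w⟫) atTop (𝓝 ⟪x, w⟫) :=
    ((continuous_inner.comp (Continuous.prodMk continuous_id continuous_const)).tendsto x).comp
      hux |>.congr fun k => rfl
  have h5 : ⟪yt, w⟫ ≤ ⟪x, w⟫ := ge_of_tendsto h4 hle
  have h6 : ⟪yt, w⟫ = t * ⟪c, w⟫ + (1 - t) * ⟪y, w⟫ := by
    rw [hyt_def]; rw [inner_add_left, real_inner_smul_left, real_inner_smul_left]
  linarith




def Dgen {n : ℕ} (B : Set (EuclideanSpace ℝ (Fin (n + 1))))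
    (v w : EuclideanSpace ℝ (Fin (n + 1))) : Set (EuclideanSpace ℝ (Fin (n + 1))) :=
  {x | x ∈ B ∧ pv v x ∈ frontier (pv v '' B)} ∪
  {x | x ∈ frontier B ∧ pv v x ∈ interior (pv v '' B) ∧
    ∀ y ∈ B, pv v y = pv v x → ⟪y, w⟫ ≤ ⟪x, w⟫}

lemma Dplus_eq_Dgen : Dplus B v = Dgen B v v := rfl

lemma Dminus_eq_Dgen : Dminus B v = Dgen B v (-v) := by
  unfold Dminus Dgen D0 Uminus
  ext x
  simp only [mem_union, mem_setOf_eq, mem_sep_iff, inner_neg_right, neg_le_neg_iff]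

lemma isClosed_Dgen (hBc : IsCompact B) (hBsc : StrictlyConvexSet B)
    (hBint : (interior B).Nonempty) (w : EuclideanSpace ℝ (Fin (n+1)))
    (hw : ∀ a : ↥((ℝ ∙ v)ᗮ), ⟪(a : EuclideanSpace ℝ (Fin (n+1))), w⟫ = 0) :
    IsClosed (Dgen B v w) := by
  have hK : IsClosed (pv v '' B) := (hBc.image (pv v).continuous).isClosed
  apply IsSeqClosed.isClosed
  intro u x hu hux
  have hfrB : frontier B ⊆ B := by
    rw [frontier_eq_closure_inter_closure, hBc.isClosed.closure_eq]
    exact fun z hz => hz.1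
  have huB : ∀ k, u k ∈ B := by
    intro k
    rcases hu k with h | h
    exacts [h.1, hfrB h.1]
  have hpvtend : Tendsto (fun k => pv v (u k)) atTop (𝓝 (pv v x)) :=
    ((pv v).continuous.tendsto x).comp hux
  have hxB : x ∈ B := hBc.isClosed.mem_of_tendsto hux (Eventually.of_forall huB)
  by_cases hfr : pv v x ∈ frontier (pv v '' B)
  · exact Or.inl ⟨hxB, hfr⟩
  have hint : pv v x ∈ interior (pv v '' B) := by
    by_contra hcon
    exact hfr (hK.frontier_eq ▸ ⟨mem_image_of_mem _ hxB, hcon⟩)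
  have hev : ∀ᶠ k in atTop, u k ∈ {x | x ∈ frontier B ∧ pv v x ∈ interior (pv v '' B) ∧
      ∀ y ∈ B, pv v y = pv v (u k) → ⟪y, w⟫ ≤ ⟪u k, w⟫} := by
    by_contra hcon
    rw [not_eventually] at hcon
    have h1 : ∃ᶠ k in atTop, pv v (u k) ∈ frontier (pv v '' B) := by
      apply hcon.mono
      intro k hk
      rcases hu k with h | h
      · exact h.2
      · exact absurd h hk
    have h2 := mem_closure_of_frequently_of_tendsto h1 hpvtend
    rw [isClosed_frontier.closure_eq] at h2
    exact hfr h2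
  have hxfr : x ∈ frontier B := by
    have h1 : ∃ᶠ k in atTop, u k ∈ frontier B :=
      (hev.mono fun k hk => hk.1).frequently
    have h2 := mem_closure_of_frequently_of_tendsto h1 hux
    rwa [isClosed_frontier.closure_eq] at h2
  obtain ⟨N, hN⟩ := eventually_atTop.1 hev
  refine Or.inr ⟨hxfr, hint, ?_⟩
  refine fiber_bound hBsc hBint (u := fun k => u (k + N)) w hw ?_ ?_ hint
  · intro k
    exact ⟨huB _, (hN (k + N) (Nat.le_add_left N k)).2.2⟩
  · exact hux.comp (tendsto_add_atTop_nat N)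



lemma frontier_sub_B (hBc : IsCompact B) : frontier B ⊆ B := by
  rw [frontier_eq_closure_inter_closure, hBc.isClosed.closure_eq]
  exact fun z hz => hz.1

lemma Dplus_sub_B (hBc : IsCompact B) : Dplus B v ⊆ B := by
  rintro z (hz | hz)
  exacts [hz.1, frontier_sub_B hBc hz.1]

lemma Dminus_sub_B (hBc : IsCompact B) : Dminus B v ⊆ B := by
  rintro z (hz | hz)
  exacts [hz.1, frontier_sub_B hBc hz.1]

lemma median_pv (hz : x ∈ median B v) :
    ∃ xp ∈ Dplus B v, ∃ xm ∈ Dminus B v, pv v xp = pv v xm ∧ x = midpoint ℝ xp xm ∧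
      pv v x = pv v xp := by
  obtain ⟨xp, hxp, xm, hxm, hpm, hmid⟩ := hz
  exact ⟨xp, hxp, xm, hxm, hpm, hmid, by rw [hmid, pv_midpoint, ← hpm, midpoint_self]⟩

lemma pv_median_mem (hBc : IsCompact B) (hz : x ∈ median B v) : pv v x ∈ pv v '' B := by
  obtain ⟨xp, hxp, _, _, _, _, hpvx⟩ := median_pv hz
  exact hpvx ▸ mem_image_of_mem _ (Dplus_sub_B hBc hxp)

lemma pv_median_inj (hBc : IsCompact B) (hBsc : StrictlyConvexSet B) (hv : ‖v‖ = 1)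
    (hx : x ∈ median B v) (hy : y ∈ median B v) (hxy : pv v x = pv v y) : x = y := by
  obtain ⟨xp, hxp, xm, hxm, hpm, hmidx, hpvx⟩ := median_pv hx
  obtain ⟨yp, hyp, ym, hym, hqm, hmidy, hpvy⟩ := median_pv hy
  have hxpB := Dplus_sub_B hBc hxp
  have hypB := Dplus_sub_B hBc hyp
  have hxmB := Dminus_sub_B hBc hxm
  have hymB := Dminus_sub_B hBc hym
  have hfib : pv v xp = pv v yp := by rw [← hpvx, ← hpvy, hxy]
  by_cases hfr : pv v xp ∈ frontier (pv v '' B)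
  · have h1 : xp = yp := fiber_unique hBsc hxpB hypB hfib hfr
    have h2 : xp = xm := fiber_unique hBsc hxpB hxmB hpm hfr
    have h3 : yp = ym := fiber_unique hBsc hypB hymB hqm (by rwa [← hfib])
    rw [hmidx, hmidy, h1, ← h2, ← h3, h1]
  · have hxpU : xp ∈ Uplus B v := hxp.resolve_left fun h => hfr h.2
    have hypU : yp ∈ Uplus B v := hyp.resolve_left fun h => hfr (hfib ▸ h.2)
    have hxmU : xm ∈ Uminus B v := hxm.resolve_left fun h => hfr (hpm ▸ h.2)
    have hymU : ym ∈ Uminus B v := hym.resolve_left fun h =>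
      hfr (by rw [hfib, hqm]; exact h.2)
    have hp : xp = yp := by
      refine eq_of_pv_inner hv hfib (le_antisymm ?_ ?_)
      · exact hypU.2.2 xp hxpB hfib
      · exact hxpU.2.2 yp hypB hfib.symm
    have hfib2 : pv v xm = pv v ym := by rw [← hpm, ← hqm, hfib]
    have hm : xm = ym := by
      refine eq_of_pv_inner hv hfib2 (le_antisymm ?_ ?_)
      · exact hxmU.2.2 ym hymB hfib2.symm
      · exact hymU.2.2 xm hxmB hfib2
    rw [hmidx, hmidy, hp, hm]

lemma pv_median_surj (hBc : IsCompact B) (hBsc : StrictlyConvexSet B) (hv : ‖v‖ = 1)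
    {w : ↥((ℝ ∙ v)ᗮ)} (hw : w ∈ pv v '' B) : ∃ z ∈ median B v, pv v z = w := by
  have hK : IsClosed (pv v '' B) := (hBc.image (pv v).continuous).isClosed
  by_cases hfr : w ∈ frontier (pv v '' B)
  · obtain ⟨b, hb, rfl⟩ := hw
    refine ⟨b, ⟨b, Or.inl ⟨hb, hfr⟩, b, Or.inl ⟨hb, hfr⟩, rfl, (midpoint_self ℝ b).symm⟩, rfl⟩
  · have hint : w ∈ interior (pv v '' B) := by
      by_contra hcon
      exact hfr (hK.frontier_eq ▸ ⟨hw, hcon⟩)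
    -- fiber
    set F : Set (EuclideanSpace ℝ (Fin (n+1))) := B ∩ (pv v) ⁻¹' {w} with hF
    have hFc : IsCompact F :=
      hBc.inter_right (isClosed_singleton.preimage (pv v).continuous)
    obtain ⟨b, hb, rfl⟩ := hw
    have hFne : F.Nonempty := ⟨b, hb, rfl⟩
    have hcont : Continuous (fun z : EuclideanSpace ℝ (Fin (n+1)) => ⟪z, v⟫) :=
      continuous_id.inner continuous_const
    obtain ⟨xp, hxpF, hxpmax⟩ := hFc.exists_isMaxOn hFne hcont.continuousOn
    obtain ⟨xm, hxmF, hxmmin⟩ := hFc.exists_isMinOn hFne hcont.continuousOn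
    -- xp in frontier B
    have hfrp : ∀ z ∈ F, IsMaxOn (fun z => ⟪z, v⟫) F z → z ∈ frontier B := by
      intro z hz hmax
      by_contra hcon
      have hzint : z ∈ interior B := by
        rcases (hBc.isClosed.frontier_eq ▸ hcon : ¬(z ∈ B \ interior B)) with h
        simp only [mem_diff, not_and, not_not] at h
        exact h hz.1
      obtain ⟨ε, hε, hball⟩ := Metric.isOpen_iff.1 isOpen_interior z hzint
      have hz' : z + (ε/2) • v ∈ B := by
        apply interior_subset (hball ?_)
        rw [mem_ball_iff_norm, add_sub_cancel_left, norm_smul, Real.norm_eq_abs,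
          abs_of_pos (by linarith), hv, mul_one]
        linarith
      have hz'F : z + (ε/2) • v ∈ F := by
        refine ⟨hz', ?_⟩
        simp only [mem_preimage, map_add, map_smul, pv_v, smul_zero, add_zero,
          mem_singleton_iff]
        exact hz.2
      have hthis : ⟪z + (ε/2) • v, v⟫ ≤ ⟪z, v⟫ := hmax hz'F
      have hip : ⟪z + (ε/2) • v, v⟫ = ⟪z, v⟫ + ε/2 := by
        rw [inner_add_left, real_inner_smul_left, real_inner_self_eq_norm_sq, hv]; ring
      rw [hip] at hthis
      linarith
    have hfrm : xm ∈ frontier B := by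
      -- mirror: xm maximizes ⟪·, -v⟫... reuse via neg
      by_contra hcon
      have hzint : xm ∈ interior B := by
        rcases (hBc.isClosed.frontier_eq ▸ hcon : ¬(xm ∈ B \ interior B)) with h
        simp only [mem_diff, not_and, not_not] at h
        exact h hxmF.1
      obtain ⟨ε, hε, hball⟩ := Metric.isOpen_iff.1 isOpen_interior xm hzint
      have hz' : xm - (ε/2) • v ∈ B := by
        apply interior_subset (hball ?_)
        rw [mem_ball_iff_norm, sub_sub_cancel_left, norm_neg, norm_smul, Real.norm_eq_abs,
          abs_of_pos (by linarith), hv, mul_one]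
        linarith
      have hz'F : xm - (ε/2) • v ∈ F := by
        refine ⟨hz', ?_⟩
        simp only [mem_preimage, map_sub, map_smul, pv_v, smul_zero, sub_zero,
          mem_singleton_iff]
        exact hxmF.2
      have hthis : ⟪xm, v⟫ ≤ ⟪xm - (ε/2) • v, v⟫ := hxmmin hz'F
      have hip : ⟪xm - (ε/2) • v, v⟫ = ⟪xm, v⟫ - ε/2 := by
        rw [inner_sub_left, real_inner_smul_left, real_inner_self_eq_norm_sq, hv]; ring
      rw [hip] at hthis
      linarith
    have hwp : pv v xp = pv v b := hxpF.2
    have hwm : pv v xm = pv v b := hxmF.2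
    have hxpU : xp ∈ Uplus B v := by
      refine ⟨hfrp xp hxpF hxpmax, by rwa [hwp], fun y hy hyw => ?_⟩
      exact hxpmax (⟨hy, by rw [mem_preimage, mem_singleton_iff, hyw, hwp]⟩ : y ∈ F)
    have hxmU : xm ∈ Uminus B v := by
      refine ⟨hfrm, by rwa [hwm], fun y hy hyw => ?_⟩
      exact hxmmin (⟨hy, by rw [mem_preimage, mem_singleton_iff, hyw, hwm]⟩ : y ∈ F)
    refine ⟨midpoint ℝ xp xm, ⟨xp, Or.inr hxpU, xm, Or.inr hxmU, by rw [hwp, hwm], rfl⟩, ?_⟩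
    rw [pv_midpoint, hwp, hwm, midpoint_self]



lemma inner_coe_neg_v (w : ↥((ℝ ∙ v)ᗮ)) :
    ⟪(w : EuclideanSpace ℝ (Fin (n+1))), -v⟫ = 0 := by
  rw [inner_neg_right, inner_coe_v, neg_zero]

lemma isClosed_Dplus (hBc : IsCompact B) (hBsc : StrictlyConvexSet B)
    (hBint : (interior B).Nonempty) : IsClosed (Dplus B v) := by
  rw [Dplus_eq_Dgen]
  exact isClosed_Dgen hBc hBsc hBint v fun a => inner_coe_v a

lemma isClosed_Dminus (hBc : IsCompact B) (hBsc : StrictlyConvexSet B)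
    (hBint : (interior B).Nonempty) : IsClosed (Dminus B v) := by
  rw [Dminus_eq_Dgen]
  exact isClosed_Dgen hBc hBsc hBint (-v) fun a => inner_coe_neg_v a


lemma isCompact_median (hBc : IsCompact B) (hBsc : StrictlyConvexSet B)
    (hBint : (interior B).Nonempty) : IsCompact (median B v) := by
  set P : Set (EuclideanSpace ℝ (Fin (n+1)) × EuclideanSpace ℝ (Fin (n+1))) :=
    (Dplus B v ×ˢ Dminus B v) ∩ {p | pv v p.1 = pv v p.2} with hP
  have hDp : IsCompact (Dplus B v) :=
    hBc.of_isClosed_subset (isClosed_Dplus hBc hBsc hBint) (Dplus_sub_B hBc)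
  have hDm : IsCompact (Dminus B v) :=
    hBc.of_isClosed_subset (isClosed_Dminus hBc hBsc hBint) (Dminus_sub_B hBc)
  have hPc : IsCompact P :=
    (hDp.prod hDm).inter_right
      (isClosed_eq ((pv v).continuous.comp continuous_fst)
        ((pv v).continuous.comp continuous_snd))
  have hmid : Continuous (fun p : EuclideanSpace ℝ (Fin (n+1)) × EuclideanSpace ℝ (Fin (n+1)) =>
      midpoint ℝ p.1 p.2) := by
    have : (fun p : EuclideanSpace ℝ (Fin (n+1)) × EuclideanSpace ℝ (Fin (n+1)) =>
        midpoint ℝ p.1 p.2) = fun p => (⅟(2:ℝ)) • (p.1 + p.2) := by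
      funext p; rw [midpoint_eq_smul_add]
    rw [this]
    exact (continuous_fst.add continuous_snd).const_smul (⅟(2:ℝ))
  have himg : median B v = (fun p : EuclideanSpace ℝ (Fin (n+1)) ×
      EuclideanSpace ℝ (Fin (n+1)) => midpoint ℝ p.1 p.2) '' P := by
    ext z
    constructor
    · rintro ⟨xp, hxp, xm, hxm, hpm, rfl⟩
      exact ⟨(xp, xm), ⟨⟨hxp, hxm⟩, hpm⟩, rfl⟩
    · rintro ⟨⟨xp, xm⟩, ⟨⟨hxp, hxm⟩, hpm⟩, rfl⟩
      exact ⟨xp, hxp, xm, hxm, hpm, rfl⟩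
  rw [himg]
  exact hPc.image hmid

lemma dim_W (hv : ‖v‖ = 1) : Module.finrank ℝ ↥((ℝ ∙ v)ᗮ) = n := by
  have hvne : v ≠ 0 := by intro h; rw [h, norm_zero] at hv; norm_num at hv
  have h1 : Module.finrank ℝ ↥(ℝ ∙ v) = 1 := finrank_span_singleton hvne
  have h2 := Submodule.finrank_add_finrank_orthogonal (K := ℝ ∙ v)
  rw [h1, finrank_euclideanSpace_fin] at h2
  omega

end lems

theorem stmt7 (n : ℕ) (B : Set (EuclideanSpace ℝ (Fin (n + 1))))
    (hBc : IsCompact B) (hBsc : StrictlyConvexSet B) (hBint : (interior B).Nonempty)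
    (v : EuclideanSpace ℝ (Fin (n + 1))) (hv : ‖v‖ = 1) :
    IsCompact (median B v) ∧
    (∃ h : median B v ≃ₜ (pv v '' B),
      ∀ x : median B v, (h x : ↥((ℝ ∙ v)ᗮ)) = pv v (x : EuclideanSpace ℝ (Fin (n + 1)))) ∧
    Nonempty (median B v ≃ₜ (Metric.closedBall (0 : EuclideanSpace ℝ (Fin n)) 1)) := by
  have hmedc : IsCompact (median B v) := isCompact_median hBc hBsc hBint
  have : CompactSpace (median B v) := isCompact_iff_compactSpace.1 hmedc
  -- the equiv
  set f : median B v → (pv v '' B) :=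
    fun z => ⟨pv v (z : EuclideanSpace ℝ (Fin (n+1))), pv_median_mem hBc z.2⟩ with hf
  have hfbij : Function.Bijective f := by
    constructor
    · rintro ⟨z1, hz1⟩ ⟨z2, hz2⟩ h12
      have : pv v z1 = pv v z2 := congrArg Subtype.val h12
      exact Subtype.ext (pv_median_inj hBc hBsc hv hz1 hz2 this)
    · rintro ⟨w, hw⟩
      obtain ⟨z, hz, hzw⟩ := pv_median_surj hBc hBsc hv hw
      exact ⟨⟨z, hz⟩, Subtype.ext hzw⟩
  have hfc : Continuous f :=
    Continuous.subtype_mk ((pv v).continuous.comp continuous_subtype_val) _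
  have hfc' : Continuous (Equiv.ofBijective f hfbij) := hfc
  set h : median B v ≃ₜ (pv v '' B) := hfc'.homeoOfEquivCompactToT2 with hh
  have hprop : ∀ x : median B v, (h x : ↥((ℝ ∙ v)ᗮ)) = pv v (x : EuclideanSpace ℝ (Fin (n+1))) :=
    fun x => rfl
  refine ⟨hmedc, ⟨h, hprop⟩, ?_⟩
  -- ball part
  have hKcomp : IsCompact (pv v '' B) := hBc.image (pv v).continuous
  have hKconv : Convex ℝ (pv v '' B) := (sc_convex hBsc).linear_image (pv v).toLinearMap
  have hKint : (interior (pv v '' B)).Nonempty := by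
    obtain ⟨b, hb⟩ := hBint
    exact ⟨pv v b, int_image_sub (mem_image_of_mem _ hb)⟩
  -- linear isometry to EuclideanSpace ℝ (Fin n)
  let L : ↥((ℝ ∙ v)ᗮ) ≃ₗᵢ[ℝ] EuclideanSpace ℝ (Fin n) :=
    ((stdOrthonormalBasis ℝ ↥((ℝ ∙ v)ᗮ)).reindex (finCongr (dim_W hv))).repr
  let Lh : ↥((ℝ ∙ v)ᗮ) ≃ₜ EuclideanSpace ℝ (Fin n) := L.toHomeomorph
  set K' : Set (EuclideanSpace ℝ (Fin n)) := Lh '' (pv v '' B) with hK'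
  have e1 : (pv v '' B) ≃ₜ K' := Lh.image (pv v '' B)
  have hK'comp : IsCompact K' := hKcomp.image Lh.continuous
  have hK'conv : Convex ℝ K' := hKconv.linear_image L.toLinearEquiv.toLinearMap
  have hK'int : (interior K').Nonempty := by
    obtain ⟨w, hw⟩ := hKint
    exact ⟨Lh w, (Lh.image_interior _ ▸ mem_image_of_mem _ hw : Lh w ∈ interior K')⟩
  obtain ⟨g, _, hg2, _⟩ :=
    exists_homeomorph_image_interior_closure_frontier_eq_unitBall hK'conv hK'int
      hK'comp.isBounded
  rw [hK'comp.isClosed.closure_eq] at hg2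
  exact ⟨h.trans (e1.trans ((g.image K').trans (Homeomorph.setCongr hg2)))⟩
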